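/- Suppose entire functions ψ₀, ..., ψ_κ satisfy Σ_{j=0}^κ ψ_j(u) \bar{z}^j = Σ_{j=0}^κ \overline{ψ_j(z)} u^j for all z, u ∈ ℂ. Then each ψ_p is a polynomial of degree at most κ, ψ_p(u) = Σ_{j=0}^κ d_{j,p} u^j, with coefficients satisfying d_{j,p} = \overline{d_{p,j}}. -/
import Mathlib


open Complex Finset

theorem symbols_polynomial_selfadjoint (κ : ℕ) (ψ : ℕ → ℂ → ℂ)
    (hψ : ∀ j ≤ κ, Differentiable ℂ (ψ j))
    (hid : ∀ z u : ℂ, ∑ j ∈ Finset.range (κ + 1), ψ j u * ((starRingEnd ℂ) z) ^ j =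
      ∑ j ∈ Finset.range (κ + 1), (starRingEnd ℂ) (ψ j z) * u ^ j) :
    ∃ d : ℕ → ℕ → ℂ,
      (∀ j p, j ≤ κ → p ≤ κ → d j p = (starRingEnd ℂ) (d p j)) ∧
      ∀ p ≤ κ, ∀ u : ℂ, ψ p u = ∑ j ∈ Finset.range (κ + 1), d j p * u ^ j := by
  set n := κ + 1 with hn
  set V : Matrix (Fin n) (Fin n) ℂ :=
    Matrix.vandermonde (fun i : Fin n => ((i : ℕ) : ℂ)) with hVdef
  have hdet : V.det ≠ 0 := by
    rw [hVdef, Matrix.det_vandermonde]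
    refine Finset.prod_ne_zero_iff.2 fun i _ => Finset.prod_ne_zero_iff.2 fun j hj => ?_
    have hij : i < j := Finset.mem_Ioi.1 hj
    have hvlt : (i : ℕ) < (j : ℕ) := hij
    have hne : ((i : ℕ) : ℂ) ≠ ((j : ℕ) : ℂ) := by
      exact_mod_cast hvlt.ne
    exact sub_ne_zero.2 (Ne.symm hne)
  have hVu : IsUnit V.det := isUnit_iff_ne_zero.mpr hdet
  -- key evaluation identity
  have key : ∀ (u : ℂ) (i : Fin n),
      V.mulVec (fun k => ψ (k : ℕ) u) i =
        ∑ j ∈ Finset.range n, (starRingEnd ℂ) (ψ j ((i : ℕ) : ℂ)) * u ^ j := by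
    intro u i
    have h := hid ((i : ℕ) : ℂ) u
    rw [map_natCast] at h
    have e : V.mulVec (fun k => ψ (k : ℕ) u) i =
        ∑ j : Fin n, ((i : ℕ) : ℂ) ^ (j : ℕ) * ψ (j : ℕ) u := by
      simp [Matrix.mulVec, dotProduct, hVdef, Matrix.vandermonde]
    rw [e, ← Finset.sum_range fun j => ((i : ℕ) : ℂ) ^ j * ψ j u, ← h]
    exact Finset.sum_congr rfl fun j _ => mul_comm _ _
  have hsolve : ∀ (u : ℂ) (p : Fin n),
      ψ (p : ℕ) u = ∑ i : Fin n, V⁻¹ p i *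
        ∑ j ∈ Finset.range n, (starRingEnd ℂ) (ψ j ((i : ℕ) : ℂ)) * u ^ j := by
    intro u p
    have h1 : V.mulVec (fun k => ψ (k : ℕ) u) =
        fun i : Fin n => ∑ j ∈ Finset.range n, (starRingEnd ℂ) (ψ j ((i : ℕ) : ℂ)) * u ^ j :=
      funext (key u)
    have h2 := congrArg (fun v => V⁻¹.mulVec v p) h1
    simp only [Matrix.mulVec_mulVec, Matrix.nonsing_inv_mul V hVu, Matrix.one_mulVec] at h2
    rw [h2]
    simp [Matrix.mulVec, dotProduct]
  -- the coefficients
  set d : ℕ → ℕ → ℂ := fun j p =>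
    if h : p < n then ∑ i : Fin n, V⁻¹ ⟨p, h⟩ i * (starRingEnd ℂ) (ψ j ((i : ℕ) : ℂ)) else 0
    with hd
  have hpoly : ∀ p ≤ κ, ∀ u : ℂ, ψ p u = ∑ j ∈ Finset.range n, d j p * u ^ j := by
    intro p hp u
    have hp' : p < n := by omega
    have h := hsolve u ⟨p, hp'⟩
    simp only at h
    rw [h]
    rw [Finset.sum_congr rfl fun i _ => Finset.mul_sum ..]
    rw [Finset.sum_comm]
    refine Finset.sum_congr rfl fun j _ => ?_
    rw [hd]
    simp only [hp', dif_pos]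
    rw [Finset.sum_mul]
    exact Finset.sum_congr rfl fun i _ => (mul_assoc _ _ _).symm
  -- conjugation-invariance of V⁻¹
  have hVconj : V.map (starRingEnd ℂ) = V := by
    rw [hVdef]
    ext i j
    simp [Matrix.vandermonde, map_pow]
  have hinvconj : V⁻¹.map (starRingEnd ℂ) = V⁻¹ := by
    have h1 : V * V⁻¹ = 1 := Matrix.mul_nonsing_inv V hVu
    have h2 : (V * V⁻¹).map (starRingEnd ℂ) = (1 : Matrix (Fin n) (Fin n) ℂ) := by
      rw [h1]
      ext i j
      by_cases hij : i = j <;> simp [Matrix.one_apply, hij]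
    rw [Matrix.map_mul, hVconj] at h2
    exact (Matrix.inv_eq_right_inv h2).symm
  have hc : ∀ a b, (starRingEnd ℂ) (V⁻¹ a b) = V⁻¹ a b := by
    intro a b
    have := congrFun (congrFun hinvconj a) b
    simpa [Matrix.map_apply] using this
  have hsym : ∀ j p, j ≤ κ → p ≤ κ → d j p = (starRingEnd ℂ) (d p j) := by
    intro j p hj hp
    have hj' : j < n := by omega
    have hp' : p < n := by omega
    have hmain : ∑ i : Fin n, V⁻¹ ⟨j, hj'⟩ i * ψ p ((i : ℕ) : ℂ) = d j p := by
      calc ∑ i : Fin n, V⁻¹ ⟨j, hj'⟩ i * ψ p ((i : ℕ) : ℂ)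
          = ∑ i : Fin n, ∑ k ∈ Finset.range n,
              d k p * (V⁻¹ ⟨j, hj'⟩ i * ((i : ℕ) : ℂ) ^ k) := by
            refine Finset.sum_congr rfl fun i _ => ?_
            rw [hpoly p hp ((i : ℕ) : ℂ), Finset.mul_sum]
            exact Finset.sum_congr rfl fun k _ => by ring
        _ = ∑ k ∈ Finset.range n, d k p *
              ∑ i : Fin n, V⁻¹ ⟨j, hj'⟩ i * ((i : ℕ) : ℂ) ^ k := by
            rw [Finset.sum_comm]
            exact Finset.sum_congr rfl fun k _ => (Finset.mul_sum ..).symm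
        _ = ∑ k : Fin n, d (k : ℕ) p * ∑ i : Fin n, V⁻¹ ⟨j, hj'⟩ i * V i k := by
            rw [Finset.sum_range]
            simp [hVdef, Matrix.vandermonde]
        _ = ∑ k : Fin n, d (k : ℕ) p * (V⁻¹ * V) ⟨j, hj'⟩ k := by
            simp [Matrix.mul_apply]
        _ = ∑ k : Fin n, d (k : ℕ) p * (1 : Matrix (Fin n) (Fin n) ℂ) ⟨j, hj'⟩ k := by
            rw [Matrix.nonsing_inv_mul V hVu]
        _ = d j p := by simp [Matrix.one_apply]
    have hrhs : (starRingEnd ℂ) (d p j) =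
        ∑ i : Fin n, V⁻¹ ⟨j, hj'⟩ i * ψ p ((i : ℕ) : ℂ) := by
      rw [hd]
      simp only [hj', dif_pos, map_sum, map_mul, Complex.conj_conj, hc]
    rw [hrhs, hmain]
  exact ⟨d, hsym, hpoly⟩
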